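/- For all n ∈ ℕ, all v1 ≥ 1, and all v2 with 1 ≤ v2 ≤ v1 (or v2 = ∞), the iterates satisfy V_{n}(v1, v2) ≤ V_{n}(v1+1, v2), i.e., V_n is monotonically increasing in the age of the monitor v1. Moreover, for 1 ≤ v2 < v2' ≤ v1, V_n(v1, v2) ≤ V_n(v1, v2'), and V_n(v1, v2) ≤ V_n(v1, ∞). -/

import Mathlib

/-- Value-iteration iterates for the sampling CMDP.  States are `(v1, v2)` with
`v2 : Option ℕ` (`none` meaning the transmitter holds no packet, `v2 = ∞`). -/
noncomputable def V (α q lam : ℝ) : ℕ → ℕ → Option ℕ → ℝ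
  | 0, _, _ => 0
  | n + 1, v1, v2 =>
      (v1 : ℝ) +
        min
          (lam + α * ((1 - q) * V α q lam n (v1 + 1) (some 1) +
            q * V α q lam n 1 none))
          (match v2 with
            | some w => α * ((1 - q) * V α q lam n (v1 + 1) (some (w + 1)) +
                q * V α q lam n (w + 1) none)
            | none => α * V α q lam n (v1 + 1) none)

private lemma aux_mul (α q : ℝ) (hα : 0 ≤ α) (hq' : 0 ≤ 1 - q) (hq : 0 ≤ q)
    {X X' Y Y' : ℝ} (hX : X ≤ X') (hY : Y ≤ Y') :
    α * ((1 - q) * X + q * Y) ≤ α * ((1 - q) * X' + q * Y') :=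
  mul_le_mul_of_nonneg_left (add_le_add (mul_le_mul_of_nonneg_left hX hq')
    (mul_le_mul_of_nonneg_left hY hq)) hα

/-- Monotonicity of the value-iteration iterates: increasing in the monitor age
`v1`, increasing in the finite packet age `v2`, and dominated by the
no-packet state. -/
theorem V_monotone (α q lam : ℝ) (hα0 : 0 < α) (hα1 : α < 1)
    (hq0 : 0 < q) (hq1 : q ≤ 1) (hlam : 0 ≤ lam) (n : ℕ) :
    (∀ v1 : ℕ, 1 ≤ v1 →
      (∀ v2 : ℕ, 1 ≤ v2 → v2 ≤ v1 →
        V α q lam n v1 (some v2) ≤ V α q lam n (v1 + 1) (some v2)) ∧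
      V α q lam n v1 none ≤ V α q lam n (v1 + 1) none) ∧
    (∀ v1 v2 v2' : ℕ, 1 ≤ v1 → 1 ≤ v2 → v2 < v2' → v2' ≤ v1 →
      V α q lam n v1 (some v2) ≤ V α q lam n v1 (some v2')) ∧
    (∀ v1 v2 : ℕ, 1 ≤ v2 → v2 ≤ v1 →
      V α q lam n v1 (some v2) ≤ V α q lam n v1 none) := by
  induction n with
  | zero =>
    exact ⟨fun v1 _ => ⟨fun v2 _ _ => le_rfl, le_rfl⟩,
      fun _ _ _ _ _ _ _ => le_rfl, fun _ _ _ _ => le_rfl⟩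
  | succ n ih =>
    obtain ⟨ih1, ih2, ih3⟩ := ih
    have hq' : 0 ≤ 1 - q := by linarith
    have hα : 0 ≤ α := hα0.le
    have hnone : ∀ a b : ℕ, 1 ≤ a → a ≤ b →
        V α q lam n a none ≤ V α q lam n b none := by
      intro a b ha hab
      induction hab with
      | refl => exact le_rfl
      | step h ih' => exact ih'.trans ((ih1 _ (ha.trans h)).2)
    refine ⟨?_, ?_, ?_⟩
    · intro v1 hv1
      constructor
      · intro v2 hv2 hv21
        have h1 : V α q lam n (v1 + 1) (some 1) ≤ V α q lam n (v1 + 1 + 1) (some 1) :=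
          (ih1 (v1 + 1) (by omega)).1 1 le_rfl (by omega)
        have h2 : V α q lam n (v1 + 1) (some (v2 + 1)) ≤
            V α q lam n (v1 + 1 + 1) (some (v2 + 1)) :=
          (ih1 (v1 + 1) (by omega)).1 (v2 + 1) (by omega) (by omega)
        simp only [V]
        exact add_le_add (by exact_mod_cast Nat.le_succ v1)
          (min_le_min (add_le_add_right (aux_mul α q hα hq' hq0.le h1 le_rfl) lam)
            (aux_mul α q hα hq' hq0.le h2 le_rfl))
      · have h1 : V α q lam n (v1 + 1) (some 1) ≤ V α q lam n (v1 + 1 + 1) (some 1) :=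
          (ih1 (v1 + 1) (by omega)).1 1 le_rfl (by omega)
        have h2 : V α q lam n (v1 + 1) none ≤ V α q lam n (v1 + 1 + 1) none :=
          (ih1 (v1 + 1) (by omega)).2
        simp only [V]
        exact add_le_add (by exact_mod_cast Nat.le_succ v1)
          (min_le_min (add_le_add_right (aux_mul α q hα hq' hq0.le h1 le_rfl) lam)
            (mul_le_mul_of_nonneg_left h2 hα))
    · intro v1 v2 v2' hv1 hv2 hlt hle
      have hX : V α q lam n (v1 + 1) (some (v2 + 1)) ≤
          V α q lam n (v1 + 1) (some (v2' + 1)) :=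
        ih2 (v1 + 1) (v2 + 1) (v2' + 1) (by omega) (by omega) (by omega) (by omega)
      have hY : V α q lam n (v2 + 1) none ≤ V α q lam n (v2' + 1) none :=
        hnone (v2 + 1) (v2' + 1) (by omega) (by omega)
      simp only [V]
      exact add_le_add le_rfl (min_le_min le_rfl (aux_mul α q hα hq' hq0.le hX hY))
    · intro v1 v2 hv2 hle
      have hX : V α q lam n (v1 + 1) (some (v2 + 1)) ≤ V α q lam n (v1 + 1) none :=
        ih3 (v1 + 1) (v2 + 1) (by omega) (by omega)
      have hY : V α q lam n (v2 + 1) none ≤ V α q lam n (v1 + 1) none :=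
        hnone (v2 + 1) (v1 + 1) (by omega) (by omega)
      simp only [V]
      refine add_le_add le_rfl (min_le_min le_rfl ?_)
      calc α * ((1 - q) * V α q lam n (v1 + 1) (some (v2 + 1)) +
              q * V α q lam n (v2 + 1) none)
          ≤ α * ((1 - q) * V α q lam n (v1 + 1) none +
              q * V α q lam n (v1 + 1) none) := aux_mul α q hα hq' hq0.le hX hY
        _ = α * V α q lam n (v1 + 1) none := by ring
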